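/- Let n > 0 and let X = (X_1,...,X_n) be i.i.d. discrete random variables, let I be uniform on [n] and independent of (X,Y), and let Y be a discrete random variable independent of X. Then for every deterministic function f, I(X_I ; f(X,Y) | Y, I) ≤ (1/n) · I(X ; f(X,Y) | Y). -/

import Mathlib

open Finset

/-- The probability that a random variable `X` takes value `x`, where the underlying
finite sample space has weight function `p`. -/
noncomputable def probOf {Ω α : Type*} [Fintype Ω] [DecidableEq α]
    (p : Ω → ℝ) (X : Ω → α) (x : α) : ℝ :=
  ∑ ω : Ω, if X ω = x then p ω else 0

/-- Shannon entropy. -/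
noncomputable def entropy {Ω α : Type*} [Fintype Ω] [Fintype α] [DecidableEq α]
    (p : Ω → ℝ) (X : Ω → α) : ℝ :=
  ∑ x : α, Real.negMulLog (probOf p X x)

/-- Conditional entropy `H(X | Y) = E_{y ~ Y} [H(X | Y = y)]`. -/
noncomputable def condEntropy {Ω α β : Type*} [Fintype Ω] [Fintype α] [Fintype β]
    [DecidableEq α] [DecidableEq β] (p : Ω → ℝ) (X : Ω → α) (Y : Ω → β) : ℝ :=
  ∑ y : β, probOf p Y y *
    entropy (fun ω => (if Y ω = y then p ω else 0) / probOf p Y y) X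

/-- Conditional mutual information `I(X;Y | Z) = H(X|Z) - H(X|Y,Z)`. -/
noncomputable def condMutualInfo {Ω α β γ : Type*} [Fintype Ω] [Fintype α] [Fintype β]
    [Fintype γ] [DecidableEq α] [DecidableEq β] [DecidableEq γ]
    (p : Ω → ℝ) (X : Ω → α) (Y : Ω → β) (Z : Ω → γ) : ℝ :=
  condEntropy p X Z - condEntropy p X (fun ω => (Y ω, Z ω))

section AuxLemmas

set_option linter.unusedSectionVars false

variable {Ω α β : Type*} [Fintype Ω] [Fintype α] [Fintype β] [DecidableEq α] [DecidableEq β]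
  {p : Ω → ℝ}

lemma probOf_nonneg (hp : ∀ ω, 0 ≤ p ω) (X : Ω → α) (x : α) : 0 ≤ probOf p X x :=
  Finset.sum_nonneg fun ω _ => by
    by_cases h : X ω = x <;> simp [h, hp ω]

lemma sum_probOf (X : Ω → α) : ∑ x : α, probOf p X x = ∑ ω : Ω, p ω := by
  unfold probOf
  rw [Finset.sum_comm]
  exact Finset.sum_congr rfl fun ω _ => by simp

lemma probOf_comp (g : α → β) (X : Ω → α) (b : β) :
    probOf p (fun ω => g (X ω)) b = ∑ a : α, if g a = b then probOf p X a else 0 := by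
  unfold probOf
  have : ∀ a : α, (if g a = b then ∑ ω : Ω, if X ω = a then p ω else 0 else 0)
      = ∑ ω : Ω, if g a = b ∧ X ω = a then p ω else 0 := by
    intro a; split
    · exact Finset.sum_congr rfl fun ω _ => by simp [*]
    · exact (Finset.sum_eq_zero fun ω _ => by simp [*]).symm
  simp only [this]
  rw [Finset.sum_comm]
  refine Finset.sum_congr rfl fun ω _ => ?_
  refine ((Finset.sum_eq_single (X ω) (fun x _ hx => by simp [eq_comm (a := X ω), hx])
    (by simp)).trans (by simp)).symm

lemma entropy_comp_inj {g : α → β} (hg : Function.Injective g) (X : Ω → α) :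
    entropy p (fun ω => g (X ω)) = entropy p X := by
  unfold entropy
  rw [← Finset.sum_subset (Finset.subset_univ ((Finset.univ : Finset α).image g))
    (fun b _ hb => ?_)]
  · rw [Finset.sum_image (fun a _ a' _ h => hg h)]
    refine Finset.sum_congr rfl fun a _ => ?_
    congr 1
    unfold probOf
    exact Finset.sum_congr rfl fun ω _ => by simp [hg.eq_iff]
  · simp only [Finset.mem_image, Finset.mem_univ, true_and] at hb
    push_neg at hb
    have h0 : probOf p (fun ω => g (X ω)) b = 0 :=
      Finset.sum_eq_zero fun ω _ => by simp [hb (X ω)]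
    simp [h0]

lemma probOf_cond (X : Ω → α) (Y : Ω → β) (x : α) (y : β) :
    probOf (fun ω => (if Y ω = y then p ω else 0) / probOf p Y y) X x
      = probOf p (fun ω => (X ω, Y ω)) (x, y) / probOf p Y y := by
  unfold probOf
  rw [Finset.sum_div]
  refine Finset.sum_congr rfl fun ω _ => ?_
  by_cases h1 : X ω = x <;> by_cases h2 : Y ω = y <;>
    simp [h1, h2, Prod.ext_iff, zero_div]

lemma sum_probOf_pair (X : Ω → α) (Y : Ω → β) (y : β) :
    ∑ x : α, probOf p (fun ω => (X ω, Y ω)) (x, y) = probOf p Y y := by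
  unfold probOf
  rw [Finset.sum_comm]
  refine Finset.sum_congr rfl fun ω _ => ?_
  refine (Finset.sum_eq_single (X ω) (fun x _ hx => ?_) (by simp)).trans (by simp)
  simp [Prod.ext_iff, eq_comm (a := X ω), hx]

lemma condEntropy_eq (hp : ∀ ω, 0 ≤ p ω) (X : Ω → α) (Y : Ω → β) :
    condEntropy p X Y = entropy p (fun ω => (X ω, Y ω)) - entropy p Y := by
  unfold condEntropy entropy
  simp only [probOf_cond]
  rw [Fintype.sum_prod_type_right, ← Finset.sum_sub_distrib]
  refine Finset.sum_congr rfl fun y _ => ?_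
  set c := probOf p Y y with hc
  have hj : ∑ x : α, probOf p (fun ω => (X ω, Y ω)) (x, y) = c := sum_probOf_pair X Y y
  by_cases h0 : c = 0
  · have hz : ∀ x : α, probOf p (fun ω => (X ω, Y ω)) (x, y) = 0 := by
      intro x
      have := Finset.sum_eq_zero_iff_of_nonneg
        (fun x _ => probOf_nonneg hp (fun ω => (X ω, Y ω)) (x, y)) |>.mp (hj.trans h0)
      exact this x (Finset.mem_univ x)
    simp [h0, hz]
  · have key : ∀ x : α, Real.negMulLog (probOf p (fun ω => (X ω, Y ω)) (x, y))
        = (probOf p (fun ω => (X ω, Y ω)) (x, y) / c) * Real.negMulLog c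
          + c * Real.negMulLog (probOf p (fun ω => (X ω, Y ω)) (x, y) / c) := by
      intro x
      have : probOf p (fun ω => (X ω, Y ω)) (x, y)
          = c * (probOf p (fun ω => (X ω, Y ω)) (x, y) / c) := by
        field_simp
      nth_rewrite 1 [this]
      rw [Real.negMulLog_mul]
    simp only [key]
    rw [Finset.sum_add_distrib, ← Finset.sum_mul, ← Finset.sum_div, hj,
      div_self h0, Finset.mul_sum]
    ring

lemma gibbs_pointwise {a b : ℝ} (ha : 0 ≤ a) (hb : 0 ≤ b) (hab : b = 0 → a = 0) :
    a - b ≤ a * Real.log a - a * Real.log b := by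
  rcases eq_or_lt_of_le ha with h | h
  · simp [← h, hb]
  · have hbpos : 0 < b := by
      rcases eq_or_lt_of_le hb with h' | h'
      · exact absurd (hab h'.symm) (ne_of_gt h)
      · exact h'
    have hlog : Real.log (b / a) ≤ b / a - 1 := Real.log_le_sub_one_of_pos (by positivity)
    rw [Real.log_div (ne_of_gt hbpos) (ne_of_gt h)] at hlog
    have := mul_le_mul_of_nonneg_left hlog (le_of_lt h)
    rw [mul_sub, mul_sub, mul_div_cancel₀ _ (ne_of_gt h), mul_one] at this
    linarith

lemma gibbs {ι : Type*} [Fintype ι] (a b : ι → ℝ) (ha : ∀ k, 0 ≤ a k)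
    (hb : ∀ k, 0 ≤ b k) (hab : ∀ k, b k = 0 → a k = 0)
    (hs : ∑ k, b k ≤ ∑ k, a k) :
    ∑ k, Real.negMulLog (a k) ≤ ∑ k, -(a k * Real.log (b k)) := by
  have key : ∑ k, (a k - b k) ≤ ∑ k, (a k * Real.log (a k) - a k * Real.log (b k)) :=
    Finset.sum_le_sum fun k _ => gibbs_pointwise (ha k) (hb k) (hab k)
  rw [Finset.sum_sub_distrib] at key
  simp only [Real.negMulLog, neg_mul]
  rw [Finset.sum_sub_distrib] at key
  rw [Finset.sum_neg_distrib, Finset.sum_neg_distrib]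
  linarith

lemma prod_marginal {n : ℕ} {γ : Type*} [Fintype γ] [DecidableEq γ]
    (ν : γ → ℝ) (hν : ∑ c : γ, ν c = 1) (i : Fin n) (c : γ) :
    ∑ x : Fin n → γ, (if x i = c then ∏ j, ν (x j) else 0) = ν c := by
  set ν' : Fin n → γ → ℝ := fun j g => if j = i then (if g = c then ν c else 0) else ν g
    with hν'
  have h : ∀ x : Fin n → γ, (if x i = c then ∏ j, ν (x j) else 0)
      = ∏ j, ν' j (x j) := by
    intro x
    by_cases h1 : x i = c
    · rw [if_pos h1]
      refine Finset.prod_congr rfl fun j _ => ?_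
      by_cases h2 : j = i <;> simp [hν', h2, h1]
    · rw [if_neg h1]
      refine (Finset.prod_eq_zero (Finset.mem_univ i) ?_).symm
      simp [hν', h1]
  simp only [h]
  rw [show (univ : Finset (Fin n → γ)) = Fintype.piFinset (fun _ => univ) from
    (Fintype.piFinset_univ).symm, Finset.sum_prod_piFinset]
  rw [Finset.prod_eq_single i (fun j _ hj => by simp [hν', hj, hν]) (by simp)]
  simp [hν']

lemma sum_fiber {B C : Type*} [Fintype B] [Fintype C] [DecidableEq C]
    (k : B → C) (h : B → ℝ) (g : C → ℝ) :
    ∑ x : B, h x * g (k x) = ∑ c : C, (∑ x : B, if k x = c then h x else 0) * g c := by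
  simp only [Finset.sum_mul]
  rw [Finset.sum_comm]
  refine Finset.sum_congr rfl fun x _ => ?_
  refine ((Finset.sum_eq_single (k x) (fun c _ hc => by
    rw [if_neg (fun h => hc h.symm), zero_mul]) (by simp)).trans (by simp)).symm

lemma sum3_rot {A B C : Type*} [Fintype A] [Fintype B] [Fintype C] (g : A → B → C → ℝ) :
    ∑ a : A, ∑ b : B, ∑ c : C, g a b c = ∑ b : B, ∑ c : C, ∑ a : A, g a b c := by
  rw [Finset.sum_comm]
  exact Finset.sum_congr rfl fun b _ => Finset.sum_comm

lemma sum4_rot {A B C D : Type*} [Fintype A] [Fintype B] [Fintype C] [Fintype D]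
    (g : A → B → C → D → ℝ) :
    ∑ a : A, ∑ b : B, ∑ c : C, ∑ d : D, g a b c d
      = ∑ d : D, ∑ a : A, ∑ b : B, ∑ c : C, g a b c d := by
  calc ∑ a : A, ∑ b : B, ∑ c : C, ∑ d : D, g a b c d
      = ∑ a : A, ∑ b : B, ∑ d : D, ∑ c : C, g a b c d :=
        Finset.sum_congr rfl fun a _ => Finset.sum_congr rfl fun b _ => Finset.sum_comm
    _ = ∑ a : A, ∑ d : D, ∑ b : B, ∑ c : C, g a b c d :=
        Finset.sum_congr rfl fun a _ => Finset.sum_comm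
    _ = ∑ d : D, ∑ a : A, ∑ b : B, ∑ c : C, g a b c d := Finset.sum_comm

lemma ent_prod2 {A B : Type*} [Fintype A] [Fintype B] (u : A → ℝ) (v : B → ℝ)
    (hu : ∑ a, u a = 1) (hv : ∑ b, v b = 1) :
    ∑ a : A, ∑ b : B, Real.negMulLog (u a * v b)
      = ∑ a : A, Real.negMulLog (u a) + ∑ b : B, Real.negMulLog (v b) := by
  simp only [Real.negMulLog_mul, Finset.sum_add_distrib]
  congr 1
  · refine (Finset.sum_congr rfl fun a _ => ?_)
    rw [← Finset.sum_mul, hv, one_mul]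
  · rw [Finset.sum_comm]
    refine (Finset.sum_congr rfl fun b _ => ?_)
    rw [← Finset.sum_mul, hu, one_mul]

lemma sum_triple_eq {A B C : Type*} [Fintype A] [Fintype B] [Fintype C]
    [DecidableEq A] [DecidableEq C]
    (P : B → Prop) [DecidablePred P] (g : B → ℝ) (i : A) (y : C) :
    ∑ w : A × B × C, (if w.1 = i ∧ w.2.2 = y ∧ P w.2.1 then g w.2.1 else 0)
      = ∑ x : B, if P x then g x else 0 := by
  simp only [Fintype.sum_prod_type]
  rw [Finset.sum_eq_single i (fun a _ ha => Finset.sum_eq_zero fun x _ =>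
    Finset.sum_eq_zero fun c _ => by simp [ha]) (by simp)]
  refine Finset.sum_congr rfl fun x _ => ?_
  by_cases hP : P x
  · refine (Finset.sum_eq_single y (fun c _ hc => by simp [hc]) (by simp)).trans
      (by simp [hP])
  · exact (Finset.sum_eq_zero fun c _ => by simp [hP]).trans (by simp [hP])

lemma ent_aux1 {A B : Type*} [Fintype A] [Fintype B] (m : ℕ) (hm : 0 < m)
    (u : A → B → ℝ) (hu : ∑ a : A, ∑ b : B, u a b = 1) :
    ∑ a : A, ∑ b : B, ∑ _i : Fin m, Real.negMulLog ((1/(m:ℝ)) * u a b)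
      = (∑ a : A, ∑ b : B, Real.negMulLog (u a b))
        + (m : ℝ) * Real.negMulLog (1/(m:ℝ)) := by
  have hm' : (m : ℝ) ≠ 0 := Nat.cast_ne_zero.mpr hm.ne'
  have h1 : ∀ (a : A) (b : B), ∑ _i : Fin m, Real.negMulLog ((1/(m:ℝ)) * u a b)
      = u a b * ((m:ℝ) * Real.negMulLog (1/(m:ℝ))) + Real.negMulLog (u a b) := by
    intro a b
    rw [Finset.sum_const, Finset.card_univ, Fintype.card_fin, nsmul_eq_mul,
      Real.negMulLog_mul]
    field_simp
  simp only [h1, Finset.sum_add_distrib, ← Finset.sum_mul]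
  rw [hu, one_mul, add_comm]

lemma ent_aux3 {A B C : Type*} [Fintype A] [Fintype B] [Fintype C] (m : ℕ) (hm : 0 < m)
    (v : Fin m → A → B → C → ℝ)
    (hv : ∀ i, ∑ a : A, ∑ b : B, ∑ c : C, v i a b c = 1) :
    ∑ a : A, ∑ b : B, ∑ c : C, ∑ i : Fin m, Real.negMulLog ((1/(m:ℝ)) * v i a b c)
      = (1/(m:ℝ)) * (∑ i : Fin m, ∑ a : A, ∑ b : B, ∑ c : C, Real.negMulLog (v i a b c))
        + (m : ℝ) * Real.negMulLog (1/(m:ℝ)) := by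
  rw [sum4_rot]
  have h2 : ∀ i : Fin m, ∑ a : A, ∑ b : B, ∑ c : C, Real.negMulLog ((1/(m:ℝ)) * v i a b c)
      = Real.negMulLog (1/(m:ℝ))
        + (1/(m:ℝ)) * ∑ a : A, ∑ b : B, ∑ c : C, Real.negMulLog (v i a b c) := by
    intro i
    simp only [Real.negMulLog_mul, Finset.sum_add_distrib, ← Finset.sum_mul,
      ← Finset.mul_sum]
    rw [hv i, one_mul]
  simp only [h2, Finset.sum_add_distrib, Finset.sum_const, Finset.card_univ,
    Fintype.card_fin, nsmul_eq_mul, ← Finset.mul_sum]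
  ring

lemma sum_pair_eq {B C : Type*} [Fintype B] [Fintype C] [DecidableEq C]
    (P : B → Prop) [DecidablePred P] (g : B → ℝ) (y : C) :
    ∑ w : B × C, (if w.2 = y ∧ P w.1 then g w.1 else 0)
      = ∑ x : B, if P x then g x else 0 := by
  simp only [Fintype.sum_prod_type]
  refine Finset.sum_congr rfl fun x _ => ?_
  by_cases hP : P x
  · refine (Finset.sum_eq_single y (fun c _ hc => by simp [hc]) (by simp)).trans
      (by simp [hP])
  · exact (Finset.sum_eq_zero fun c _ => by simp [hP]).trans (by simp [hP])

end AuxLemmas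

theorem condMutualInfo_index_le {Ω β γ δ : Type*} [Fintype Ω]
    [Fintype β] [Fintype γ] [Fintype δ]
    [DecidableEq β] [DecidableEq γ] [DecidableEq δ]
    (n : ℕ) (hn : 0 < n)
    (p : Ω → ℝ) (hp : ∀ ω, 0 ≤ p ω) (hsum : ∑ ω : Ω, p ω = 1)
    (X : Ω → (Fin n → γ)) (Y : Ω → β) (I : Ω → Fin n)
    -- the coordinates of `X` are independent:
    (hXindep : ∀ g : Fin n → γ, probOf p X g = ∏ i, probOf p (fun ω => X ω i) (g i))
    -- the coordinates of `X` are identically distributed: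
    (hXident : ∀ i j : Fin n, ∀ c : γ,
      probOf p (fun ω => X ω i) c = probOf p (fun ω => X ω j) c)
    -- `Y` is independent of `X`:
    (hXY : ∀ (x : Fin n → γ) (y : β),
      probOf p (fun ω => (X ω, Y ω)) (x, y) = probOf p X x * probOf p Y y)
    -- `I` is uniformly distributed on `[n]`:
    (hIunif : ∀ i : Fin n, probOf p I i = 1 / n)
    -- `I` is independent of `(X, Y)`:
    (hIindep : ∀ (i : Fin n) (x : Fin n → γ) (y : β),
      probOf p (fun ω => (I ω, X ω, Y ω)) (i, x, y)
        = probOf p I i * probOf p (fun ω => (X ω, Y ω)) (x, y))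
    (f : (Fin n → γ) → β → δ) :
    condMutualInfo p (fun ω => X ω (I ω)) (fun ω => f (X ω) (Y ω)) (fun ω => (Y ω, I ω))
      ≤ (1 / n : ℝ) * condMutualInfo p X (fun ω => f (X ω) (Y ω)) Y := by
  classical
  obtain ⟨μ, hμeq⟩ : ∃ μ : γ → ℝ, μ = fun c => probOf p (fun ω => X ω ⟨0, hn⟩) c := ⟨_, rfl⟩
  obtain ⟨rr, hreq⟩ : ∃ rr : β → ℝ, rr = fun y => probOf p Y y := ⟨_, rfl⟩
  obtain ⟨qq, hqeq⟩ : ∃ qq : (Fin n → γ) → ℝ, qq = fun x => ∏ j, μ (x j) := ⟨_, rfl⟩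
  obtain ⟨WW, hWeq⟩ : ∃ WW : δ → β → ℝ,
    WW = fun d y => ∑ x : Fin n → γ, if f x y = d then qq x * rr y else 0 := ⟨_, rfl⟩
  obtain ⟨PP, hPeq⟩ : ∃ PP : Fin n → γ → δ → β → ℝ,
    PP = fun i c d y => ∑ x : Fin n → γ,
      if x i = c ∧ f x y = d then qq x * rr y else 0 := ⟨_, rfl⟩
  have hμnn : ∀ c, 0 ≤ μ c := fun c => hμeq ▸ probOf_nonneg hp _ c
  have hrnn : ∀ y, 0 ≤ rr y := fun y => hreq ▸ probOf_nonneg hp _ y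
  have hqnn : ∀ x, 0 ≤ qq x := fun x => hqeq ▸ Finset.prod_nonneg fun j _ => hμnn (x j)
  have hμ1 : ∑ c : γ, μ c = 1 := by rw [hμeq]; exact (sum_probOf _).trans hsum
  have hr1 : ∑ y : β, rr y = 1 := by rw [hreq]; exact (sum_probOf _).trans hsum
  have hq1 : ∑ x : Fin n → γ, qq x = 1 := by
    rw [hqeq]
    rw [show (univ : Finset (Fin n → γ)) = Fintype.piFinset (fun _ => univ) from
      (Fintype.piFinset_univ).symm, Finset.sum_prod_piFinset]
    simp [hμ1]
  have hqmarg : ∀ (i : Fin n) (c : γ),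
      ∑ x : Fin n → γ, (if x i = c then qq x else 0) = μ c := by
    intro i c
    rw [hqeq]
    exact prod_marginal μ hμ1 i c
  have hq' : ∀ x, probOf p X x = qq x := by
    intro x
    rw [hXindep, hqeq, hμeq]
    exact Finset.prod_congr rfl fun j _ => hXident j ⟨0, hn⟩ (x j)
  have ht : ∀ w : Fin n × (Fin n → γ) × β, probOf p (fun ω => (I ω, X ω, Y ω)) w
      = (1/n) * (qq w.2.1 * rr w.2.2) := by
    rintro ⟨i, x, y⟩
    rw [hIindep, hXY, hIunif, hq', hreq]
  -- pmf computations
  have e1 : ∀ (c : γ) (y : β) (i : Fin n),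
      probOf p (fun ω => (X ω (I ω), (Y ω, I ω))) (c, (y, i)) = (1/n) * (μ c * rr y) := by
    intro c y i
    calc probOf p (fun ω => (X ω (I ω), (Y ω, I ω))) (c, (y, i))
        = ∑ w : Fin n × (Fin n → γ) × β, if (w.2.1 w.1, (w.2.2, w.1)) = (c, (y, i))
            then probOf p (fun ω => (I ω, X ω, Y ω)) w else 0 :=
          probOf_comp (fun w : Fin n × (Fin n → γ) × β => (w.2.1 w.1, (w.2.2, w.1)))
            (fun ω => (I ω, X ω, Y ω)) (c, (y, i))
      _ = ∑ w : Fin n × (Fin n → γ) × β, if w.1 = i ∧ w.2.2 = y ∧ w.2.1 i = c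
            then (1/n) * (qq w.2.1 * rr y) else 0 := by
          refine Finset.sum_congr rfl fun w _ => ?_
          rcases w with ⟨i', x, y'⟩
          simp only [Prod.mk.injEq]
          by_cases h1 : i' = i
          · subst h1
            by_cases h2 : y' = y
            · subst h2
              simp [ht ⟨i', x, y'⟩]
            · simp [h2]
          · simp [h1]
      _ = ∑ x : Fin n → γ, if x i = c then (1/n) * (qq x * rr y) else 0 :=
          sum_triple_eq (fun x : Fin n → γ => x i = c)
            (fun x => (1/n : ℝ) * (qq x * rr y)) i y
      _ = (1/n) * (μ c * rr y) := by
          have : ∀ x : Fin n → γ, (if x i = c then (1/n) * (qq x * rr y) else 0)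
              = (1/n) * rr y * (if x i = c then qq x else 0) := by
            intro x; by_cases h : x i = c <;> simp [h] <;> ring
          simp only [this]
          rw [← Finset.mul_sum, hqmarg]
          ring
  have e2 : ∀ (y : β) (i : Fin n),
      probOf p (fun ω => (Y ω, I ω)) (y, i) = (1/n) * rr y := by
    intro y i
    calc probOf p (fun ω => (Y ω, I ω)) (y, i)
        = ∑ w : Fin n × (Fin n → γ) × β, if (w.2.2, w.1) = (y, i)
            then probOf p (fun ω => (I ω, X ω, Y ω)) w else 0 :=
          probOf_comp (fun w : Fin n × (Fin n → γ) × β => (w.2.2, w.1))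
            (fun ω => (I ω, X ω, Y ω)) (y, i)
      _ = ∑ w : Fin n × (Fin n → γ) × β, if w.1 = i ∧ w.2.2 = y ∧ True
            then (1/n) * (qq w.2.1 * rr y) else 0 := by
          refine Finset.sum_congr rfl fun w _ => ?_
          rcases w with ⟨i', x, y'⟩
          simp only [Prod.mk.injEq]
          by_cases h1 : i' = i
          · subst h1
            by_cases h2 : y' = y
            · subst h2
              simp [ht ⟨i', x, y'⟩]
            · simp [h2]
          · simp [h1]
      _ = ∑ x : Fin n → γ, if True then (1/n) * (qq x * rr y) else 0 :=
          sum_triple_eq (fun _ : Fin n → γ => True)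
            (fun x => (1/n : ℝ) * (qq x * rr y)) i y
      _ = (1/n) * rr y := by
          simp only [if_true]
          rw [← Finset.mul_sum, ← Finset.sum_mul, hq1, one_mul]
  have e3 : ∀ (d : δ) (y : β) (i : Fin n),
      probOf p (fun ω => (f (X ω) (Y ω), (Y ω, I ω))) (d, (y, i)) = (1/n) * WW d y := by
    intro d y i
    calc probOf p (fun ω => (f (X ω) (Y ω), (Y ω, I ω))) (d, (y, i))
        = ∑ w : Fin n × (Fin n → γ) × β, if (f w.2.1 w.2.2, (w.2.2, w.1)) = (d, (y, i))
            then probOf p (fun ω => (I ω, X ω, Y ω)) w else 0 :=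
          probOf_comp (fun w : Fin n × (Fin n → γ) × β => (f w.2.1 w.2.2, (w.2.2, w.1)))
            (fun ω => (I ω, X ω, Y ω)) (d, (y, i))
      _ = ∑ w : Fin n × (Fin n → γ) × β, if w.1 = i ∧ w.2.2 = y ∧ f w.2.1 y = d
            then (1/n) * (qq w.2.1 * rr y) else 0 := by
          refine Finset.sum_congr rfl fun w _ => ?_
          rcases w with ⟨i', x, y'⟩
          simp only [Prod.mk.injEq]
          by_cases h1 : i' = i
          · subst h1
            by_cases h2 : y' = y
            · subst h2
              simp [ht ⟨i', x, y'⟩, and_comm]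
            · simp [h2]
          · simp [h1]
      _ = ∑ x : Fin n → γ, if f x y = d then (1/n) * (qq x * rr y) else 0 :=
          sum_triple_eq (fun x : Fin n → γ => f x y = d)
            (fun x => (1/n : ℝ) * (qq x * rr y)) i y
      _ = (1/n) * WW d y := by
          rw [hWeq, Finset.mul_sum]
          refine Finset.sum_congr rfl fun x _ => ?_
          by_cases h : f x y = d <;> simp [h]
  have e4 : ∀ (c : γ) (d : δ) (y : β) (i : Fin n),
      probOf p (fun ω => (X ω (I ω), (f (X ω) (Y ω), (Y ω, I ω)))) (c, (d, (y, i)))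
        = (1/n) * PP i c d y := by
    intro c d y i
    calc probOf p (fun ω => (X ω (I ω), (f (X ω) (Y ω), (Y ω, I ω)))) (c, (d, (y, i)))
        = ∑ w : Fin n × (Fin n → γ) × β,
            if (w.2.1 w.1, (f w.2.1 w.2.2, (w.2.2, w.1))) = (c, (d, (y, i)))
            then probOf p (fun ω => (I ω, X ω, Y ω)) w else 0 :=
          probOf_comp
            (fun w : Fin n × (Fin n → γ) × β => (w.2.1 w.1, (f w.2.1 w.2.2, (w.2.2, w.1))))
            (fun ω => (I ω, X ω, Y ω)) (c, (d, (y, i)))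
      _ = ∑ w : Fin n × (Fin n → γ) × β, if w.1 = i ∧ w.2.2 = y ∧ (w.2.1 i = c ∧ f w.2.1 y = d)
            then (1/n) * (qq w.2.1 * rr y) else 0 := by
          refine Finset.sum_congr rfl fun w _ => ?_
          rcases w with ⟨i', x, y'⟩
          simp only [Prod.mk.injEq]
          by_cases h1 : i' = i
          · subst h1
            by_cases h2 : y' = y
            · subst h2
              by_cases h3 : x i' = c <;> by_cases h4 : f x y' = d <;>
                simp [ht ⟨i', x, y'⟩, h3, h4]
            · simp [h2]
          · simp [h1]
      _ = ∑ x : Fin n → γ, if x i = c ∧ f x y = d then (1/n) * (qq x * rr y) else 0 :=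
          sum_triple_eq (fun x : Fin n → γ => x i = c ∧ f x y = d)
            (fun x => (1/n : ℝ) * (qq x * rr y)) i y
      _ = (1/n) * PP i c d y := by
          rw [hPeq, Finset.mul_sum]
          refine Finset.sum_congr rfl fun x _ => ?_
          by_cases h : x i = c ∧ f x y = d <;> simp [h]
  have e5 : ∀ (x : Fin n → γ) (y : β),
      probOf p (fun ω => (X ω, Y ω)) (x, y) = qq x * rr y := by
    intro x y
    rw [hXY, hq', hreq]
  have e7 : ∀ (d : δ) (y : β),
      probOf p (fun ω => (f (X ω) (Y ω), Y ω)) (d, y) = WW d y := by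
    intro d y
    calc probOf p (fun ω => (f (X ω) (Y ω), Y ω)) (d, y)
        = ∑ w : (Fin n → γ) × β, if (f w.1 w.2, w.2) = (d, y)
            then probOf p (fun ω => (X ω, Y ω)) w else 0 :=
          probOf_comp (fun w : (Fin n → γ) × β => (f w.1 w.2, w.2))
            (fun ω => (X ω, Y ω)) (d, y)
      _ = ∑ w : (Fin n → γ) × β, if w.2 = y ∧ f w.1 y = d then qq w.1 * rr y else 0 := by
          refine Finset.sum_congr rfl fun w _ => ?_
          rcases w with ⟨x, y'⟩
          simp only [Prod.mk.injEq]
          by_cases h2 : y' = y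
          · subst h2
            simp [e5, and_comm]
          · simp [h2]
      _ = ∑ x : Fin n → γ, if f x y = d then qq x * rr y else 0 :=
          sum_pair_eq (fun x : Fin n → γ => f x y = d) (fun x => qq x * rr y) y
      _ = WW d y := by rw [hWeq]
  have hn' : (0:ℝ) < n := by exact_mod_cast hn
  have hW1 : ∑ d : δ, ∑ y : β, WW d y = 1 := by
    rw [hWeq]
    rw [sum3_rot]
    have hcol : ∀ (y : β) (x : Fin n → γ),
        ∑ d : δ, (if f x y = d then qq x * rr y else 0) = qq x * rr y := by
      intro y x
      rw [Finset.sum_ite_eq]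
      simp
    simp only [hcol]
    calc ∑ y : β, ∑ x : Fin n → γ, qq x * rr y
        = ∑ y : β, rr y := by
          refine Finset.sum_congr rfl fun y _ => ?_
          rw [← Finset.sum_mul, hq1, one_mul]
      _ = 1 := hr1
  have hPW : ∀ (i : Fin n) (d : δ) (y : β), ∑ c : γ, PP i c d y = WW d y := by
    intro i d y
    rw [hPeq, hWeq]
    rw [Finset.sum_comm]
    refine Finset.sum_congr rfl fun x _ => ?_
    by_cases h : f x y = d
    · simp only [h, and_true]
      rw [Finset.sum_ite_eq]
      simp
    · simp [h]
  have hPsum : ∀ i : Fin n, ∑ c : γ, ∑ d : δ, ∑ y : β, PP i c d y = 1 := by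
    intro i
    rw [sum3_rot]
    calc ∑ d : δ, ∑ y : β, ∑ c : γ, PP i c d y
        = ∑ d : δ, ∑ y : β, WW d y :=
          Finset.sum_congr rfl fun d _ => Finset.sum_congr rfl fun y _ => hPW i d y
      _ = 1 := hW1
  have hfib : ∀ (i : Fin n) (c : γ) (d : δ) (y : β),
      (∑ x : Fin n → γ, if x i = c then (if f x y = d then qq x * rr y else 0) else 0)
        = PP i c d y := by
    intro i c d y
    rw [hPeq]
    refine Finset.sum_congr rfl fun x _ => ?_
    by_cases h1 : x i = c <;> by_cases h2 : f x y = d <;> simp [h1, h2]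
  have hHq : ∑ x : Fin n → γ, Real.negMulLog (qq x)
      = (n : ℝ) * ∑ c : γ, Real.negMulLog (μ c) := by
    have hpt : ∀ x : Fin n → γ, qq x * Real.log (qq x)
        = ∑ j : Fin n, qq x * Real.log (μ (x j)) := by
      intro x
      by_cases h0 : qq x = 0
      · simp [h0]
      · have hfac : ∀ j ∈ (univ : Finset (Fin n)), μ (x j) ≠ 0 := by
          intro j _ hz
          apply h0
          rw [hqeq]
          exact Finset.prod_eq_zero (Finset.mem_univ j) hz
        have hlog : Real.log (qq x) = ∑ j : Fin n, Real.log (μ (x j)) := by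
          rw [hqeq]
          exact Real.log_prod hfac
        rw [hlog, Finset.mul_sum]
    calc ∑ x : Fin n → γ, Real.negMulLog (qq x)
        = ∑ x : Fin n → γ, -(∑ j : Fin n, qq x * Real.log (μ (x j))) := by
          simp only [Real.negMulLog_eq_neg]
          exact Finset.sum_congr rfl fun x _ => by rw [hpt]
      _ = -∑ j : Fin n, ∑ x : Fin n → γ, qq x * Real.log (μ (x j)) := by
          rw [Finset.sum_neg_distrib, Finset.sum_comm]
      _ = -∑ j : Fin n, ∑ c : γ, μ c * Real.log (μ c) := by
          congr 1
          refine Finset.sum_congr rfl fun j _ => ?_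
          rw [sum_fiber (fun x : Fin n → γ => x j) qq (fun c => Real.log (μ c))]
          exact Finset.sum_congr rfl fun c _ => by rw [hqmarg]
      _ = (n:ℝ) * ∑ c : γ, Real.negMulLog (μ c) := by
          rw [Finset.sum_const, Finset.card_univ, Fintype.card_fin, nsmul_eq_mul]
          simp only [Real.negMulLog_eq_neg]
          rw [Finset.sum_neg_distrib]
          ring
  have hμr1 : ∑ c : γ, ∑ y : β, μ c * rr y = 1 := by
    calc ∑ c : γ, ∑ y : β, μ c * rr y = ∑ c : γ, μ c := by
          refine Finset.sum_congr rfl fun c _ => ?_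
          rw [← Finset.mul_sum, hr1, mul_one]
      _ = 1 := hμ1
  -- entropy evaluations
  have hE1 : entropy p (fun ω => (X ω (I ω), (Y ω, I ω)))
      = ((∑ c : γ, Real.negMulLog (μ c)) + ∑ y : β, Real.negMulLog (rr y))
        + (n : ℝ) * Real.negMulLog (1/(n:ℝ)) := by
    simp only [entropy, Fintype.sum_prod_type]
    simp only [e1]
    rw [ent_aux1 n hn (fun c y => μ c * rr y) hμr1]
    rw [ent_prod2 μ rr hμ1 hr1]
  have hE2 : entropy p (fun ω => (Y ω, I ω))
      = (∑ y : β, Real.negMulLog (rr y)) + (n : ℝ) * Real.negMulLog (1/(n:ℝ)) := by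
    simp only [entropy, Fintype.sum_prod_type]
    simp only [e2]
    have h1 : ∀ y : β, ∑ _i : Fin n, Real.negMulLog ((1/(n:ℝ)) * rr y)
        = rr y * ((n:ℝ) * Real.negMulLog (1/(n:ℝ))) + Real.negMulLog (rr y) := by
      intro y
      rw [Finset.sum_const, Finset.card_univ, Fintype.card_fin, nsmul_eq_mul,
        Real.negMulLog_mul]
      have hm' : (n : ℝ) ≠ 0 := ne_of_gt hn'
      field_simp
    simp only [h1, Finset.sum_add_distrib, ← Finset.sum_mul]
    rw [hr1, one_mul, add_comm]
  have hE3 : entropy p (fun ω => (f (X ω) (Y ω), (Y ω, I ω)))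
      = (∑ d : δ, ∑ y : β, Real.negMulLog (WW d y))
        + (n : ℝ) * Real.negMulLog (1/(n:ℝ)) := by
    simp only [entropy, Fintype.sum_prod_type]
    simp only [e3]
    rw [ent_aux1 n hn (fun d y => WW d y) hW1]
  have hE4 : entropy p (fun ω => (X ω (I ω), (f (X ω) (Y ω), (Y ω, I ω))))
      = (1/(n:ℝ)) * (∑ i : Fin n, ∑ c : γ, ∑ d : δ, ∑ y : β, Real.negMulLog (PP i c d y))
        + (n : ℝ) * Real.negMulLog (1/(n:ℝ)) := by
    simp only [entropy, Fintype.sum_prod_type]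
    simp only [e4]
    exact ent_aux3 n hn (fun i c d y => PP i c d y) hPsum
  have hE6 : entropy p Y = ∑ y : β, Real.negMulLog (rr y) := by
    simp only [entropy]
    exact Finset.sum_congr rfl fun y _ => by rw [hreq]
  have hE7 : entropy p (fun ω => (f (X ω) (Y ω), Y ω))
      = ∑ d : δ, ∑ y : β, Real.negMulLog (WW d y) := by
    simp only [entropy, Fintype.sum_prod_type]
    simp only [e7]
  have hcompinj : entropy p (fun ω => (X ω, (f (X ω) (Y ω), Y ω)))
      = entropy p (fun ω => (X ω, Y ω)) := by
    have hinj : Function.Injective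
        (fun w : (Fin n → γ) × β => (w.1, (f w.1 w.2, w.2))) := by
      rintro ⟨x, y⟩ ⟨x', y'⟩ h
      simp only [Prod.mk.injEq] at h
      exact Prod.ext h.1 h.2.2
    exact entropy_comp_inj hinj (fun ω => (X ω, Y ω))
  -- the core Gibbs inequality
  obtain ⟨aa, haeq⟩ : ∃ aa : (Fin n → γ) × δ × β → ℝ,
    aa = fun w => if f w.1 w.2.2 = w.2.1 then qq w.1 * rr w.2.2 else 0 := ⟨_, rfl⟩
  obtain ⟨bb, hbeq⟩ : ∃ bb : (Fin n → γ) × δ × β → ℝ,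
    bb = fun w => (∏ i, PP i (w.1 i) w.2.1 w.2.2) / (WW w.2.1 w.2.2)^(n-1) := ⟨_, rfl⟩
  have hann : ∀ w, 0 ≤ aa w := by
    intro w
    rw [haeq]
    dsimp only
    split
    · exact mul_nonneg (hqnn _) (hrnn _)
    · exact le_refl 0
  have hPnn : ∀ i c d y, 0 ≤ PP i c d y := by
    intro i c d y
    rw [hPeq]
    refine Finset.sum_nonneg fun x _ => ?_
    split
    · exact mul_nonneg (hqnn _) (hrnn _)
    · exact le_refl 0
  have hWnn : ∀ d y, 0 ≤ WW d y := by
    intro d y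
    rw [hWeq]
    refine Finset.sum_nonneg fun x _ => ?_
    split
    · exact mul_nonneg (hqnn _) (hrnn _)
    · exact le_refl 0
  have hbnn : ∀ w, 0 ≤ bb w := by
    intro w
    rw [hbeq]
    exact div_nonneg (Finset.prod_nonneg fun i _ => hPnn _ _ _ _)
      (pow_nonneg (hWnn _ _) _)
  have hdom : ∀ (x : Fin n → γ) (d : δ) (y : β), aa (x, (d, y)) ≠ 0 →
      (0 < aa (x, (d, y)))
      ∧ (∀ i, aa (x, (d, y)) ≤ PP i (x i) d y)
      ∧ aa (x, (d, y)) ≤ WW d y := by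
    intro x d y h0
    have hfxy : f x y = d := by
      by_contra hc
      apply h0
      rw [haeq]
      simp [hc]
    have haval : aa (x, (d, y)) = qq x * rr y := by rw [haeq]; simp [hfxy]
    refine ⟨lt_of_le_of_ne (hann _) (Ne.symm h0), fun i => ?_, ?_⟩
    · rw [hPeq, haval]
      refine Finset.single_le_sum (f := fun x' : Fin n → γ =>
        if x' i = x i ∧ f x' y = d then qq x' * rr y else 0) (fun x' _ => ?_)
        (Finset.mem_univ x) |>.trans_eq' ?_
      · split
        · exact mul_nonneg (hqnn _) (hrnn _)
        · exact le_refl 0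
      · simp [hfxy]
    · rw [hWeq, haval]
      refine Finset.single_le_sum (f := fun x' : Fin n → γ =>
        if f x' y = d then qq x' * rr y else 0) (fun x' _ => ?_)
        (Finset.mem_univ x) |>.trans_eq' ?_
      · split
        · exact mul_nonneg (hqnn _) (hrnn _)
        · exact le_refl 0
      · simp [hfxy]
  have hab : ∀ w, bb w = 0 → aa w = 0 := by
    rintro ⟨x, d, y⟩ hb0
    by_contra h0
    obtain ⟨hpos, hPge, hWge⟩ := hdom x d y h0
    have : 0 < bb (x, (d, y)) := by
      rw [hbeq]
      exact div_pos (Finset.prod_pos fun i _ => lt_of_lt_of_le hpos (hPge i))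
        (pow_pos (lt_of_lt_of_le hpos hWge) _)
    exact absurd hb0 (ne_of_gt this)
  have hsumaa : ∑ w : (Fin n → γ) × δ × β, aa w = ∑ d : δ, ∑ y : β, WW d y := by
    rw [haeq]
    simp only [Fintype.sum_prod_type]
    rw [sum3_rot]
    refine Finset.sum_congr rfl fun d _ => Finset.sum_congr rfl fun y _ => ?_
    rw [hWeq]
  have hsumbb : ∑ w : (Fin n → γ) × δ × β, bb w = ∑ d : δ, ∑ y : β, WW d y := by
    rw [hbeq]
    simp only [Fintype.sum_prod_type]
    rw [sum3_rot]
    refine Finset.sum_congr rfl fun d _ => Finset.sum_congr rfl fun y _ => ?_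
    rw [← Finset.sum_div]
    have hnum : ∑ x : Fin n → γ, ∏ i, PP i (x i) d y = (WW d y)^n := by
      rw [show (univ : Finset (Fin n → γ)) = Fintype.piFinset (fun _ => univ) from
        (Fintype.piFinset_univ).symm,
        Finset.sum_prod_piFinset (univ : Finset γ) (fun i c => PP i c d y)]
      rw [Finset.prod_congr rfl (fun i _ => hPW i d y), Finset.prod_const,
        Finset.card_univ, Fintype.card_fin]
    rw [hnum]
    by_cases hW0 : WW d y = 0
    · rw [hW0, zero_pow hn.ne', zero_div]
    · have hpow : (WW d y)^n = (WW d y)^(n-1) * WW d y := by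
        rw [← pow_succ]
        congr 1
        omega
      rw [hpow, mul_div_cancel_left₀ _ (pow_ne_zero _ hW0)]
  have ia : ∑ w : (Fin n → γ) × δ × β, Real.negMulLog (aa w)
      = (n:ℝ) * (∑ c : γ, Real.negMulLog (μ c)) + ∑ y : β, Real.negMulLog (rr y) := by
    rw [haeq]
    simp only [Fintype.sum_prod_type]
    rw [sum3_rot, sum3_rot]
    have hcol : ∀ (y : β) (x : Fin n → γ),
        ∑ d : δ, Real.negMulLog (if f x y = d then qq x * rr y else 0)
          = Real.negMulLog (qq x * rr y) := by
      intro y x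
      refine (Finset.sum_eq_single (f x y) (fun d _ hd => ?_) (by simp)).trans (by simp)
      rw [if_neg (fun h => hd h.symm), Real.negMulLog_zero]
    simp only [hcol]
    rw [Finset.sum_comm, ent_prod2 qq rr hq1 hr1, hHq]
  have hpt2 : ∀ (x : Fin n → γ) (d : δ) (y : β),
      -(aa (x, (d, y)) * Real.log (bb (x, (d, y))))
      = (∑ i : Fin n, -(aa (x, (d, y)) * Real.log (PP i (x i) d y)))
        + ((n:ℝ)-1) * (aa (x, (d, y)) * Real.log (WW d y)) := by
    intro x d y
    by_cases h0 : aa (x, (d, y)) = 0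
    · simp [h0]
    · obtain ⟨hpos, hPge, hWge⟩ := hdom x d y h0
      have hWpos : 0 < WW d y := lt_of_lt_of_le hpos hWge
      have hPpos : ∀ i, 0 < PP i (x i) d y := fun i => lt_of_lt_of_le hpos (hPge i)
      have hlogb : Real.log (bb (x, (d, y)))
          = (∑ i : Fin n, Real.log (PP i (x i) d y)) - ((n:ℝ)-1) * Real.log (WW d y) := by
        rw [hbeq]
        dsimp only
        rw [Real.log_div (ne_of_gt (Finset.prod_pos fun i _ => hPpos i))
          (pow_ne_zero _ (ne_of_gt hWpos)),
          Real.log_prod (fun i _ => ne_of_gt (hPpos i)), Real.log_pow,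
          Nat.cast_pred hn]
      have hsn : ∑ i : Fin n, -(aa (x, (d, y)) * Real.log (PP i (x i) d y))
          = -(aa (x, (d, y)) * ∑ i : Fin n, Real.log (PP i (x i) d y)) := by
        rw [Finset.mul_sum, Finset.sum_neg_distrib]
      rw [hlogb, hsn]
      ring
  have ib : ∑ w : (Fin n → γ) × δ × β, -(aa w * Real.log (bb w))
      = (∑ i : Fin n, ∑ c : γ, ∑ d : δ, ∑ y : β, Real.negMulLog (PP i c d y))
        - ((n:ℝ) - 1) * (∑ d : δ, ∑ y : β, Real.negMulLog (WW d y)) := by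
    simp only [Fintype.sum_prod_type]
    simp only [hpt2]
    simp only [Finset.sum_add_distrib]
    have part1 : ∑ x : Fin n → γ, ∑ d : δ, ∑ y : β, ∑ i : Fin n,
        -(aa (x, (d, y)) * Real.log (PP i (x i) d y))
        = ∑ i : Fin n, ∑ c : γ, ∑ d : δ, ∑ y : β, Real.negMulLog (PP i c d y) := by
      rw [sum4_rot]
      refine Finset.sum_congr rfl fun i _ => ?_
      rw [sum3_rot]
      have inner : ∀ (d : δ) (y : β), ∑ x : Fin n → γ,
          -(aa (x, (d, y)) * Real.log (PP i (x i) d y))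
          = ∑ c : γ, Real.negMulLog (PP i c d y) := by
        intro d y
        rw [Finset.sum_neg_distrib,
          sum_fiber (fun x : Fin n → γ => x i) (fun x => aa (x, (d, y)))
            (fun c => Real.log (PP i c d y))]
        have hfib2 : ∀ c : γ,
            (∑ x : Fin n → γ, if x i = c then aa (x, (d, y)) else 0) = PP i c d y := by
          intro c
          rw [← hfib i c d y]
          refine Finset.sum_congr rfl fun x _ => ?_
          rw [haeq]
        simp only [hfib2, Real.negMulLog_eq_neg]
        exact (Finset.sum_neg_distrib _).symm
      simp only [inner]
      rw [sum3_rot, sum3_rot]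
    have part2 : ∑ x : Fin n → γ, ∑ d : δ, ∑ y : β,
        ((n:ℝ)-1) * (aa (x, (d, y)) * Real.log (WW d y))
        = -(((n:ℝ)-1) * ∑ d : δ, ∑ y : β, Real.negMulLog (WW d y)) := by
      simp only [← Finset.mul_sum]
      rw [sum3_rot]
      have hsa : ∀ (d : δ) (y : β), ∑ x : Fin n → γ, aa (x, (d, y)) = WW d y := by
        intro d y
        rw [hWeq]
        exact Finset.sum_congr rfl fun x _ => by rw [haeq]
      have inner : ∀ (d : δ) (y : β), ∑ x : Fin n → γ,
          aa (x, (d, y)) * Real.log (WW d y) = -Real.negMulLog (WW d y) := by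
        intro d y
        rw [← Finset.sum_mul, hsa]
        simp [Real.negMulLog_eq_neg]
      simp only [inner]
      simp only [Finset.sum_neg_distrib, Finset.mul_sum, mul_neg, neg_neg]
    rw [part1, part2]
    ring
  have hgibbs := gibbs aa bb hann hbnn hab (le_of_eq (hsumbb.trans hsumaa.symm))
  rw [ia, ib] at hgibbs
  -- final assembly
  simp only [condMutualInfo, condEntropy_eq hp]
  rw [hE1, hE2, hE3, hE4, hE6, hE7, hcompinj]
  have hponn : (0:ℝ) ≤ 1/(n:ℝ) := by positivity
  have hS := mul_le_mul_of_nonneg_left hgibbs hponn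
  have hexp : (1/(n:ℝ)) * ((n:ℝ) * (∑ c : γ, Real.negMulLog (μ c))
      + ∑ y : β, Real.negMulLog (rr y))
      = (∑ c : γ, Real.negMulLog (μ c)) + (1/(n:ℝ)) * ∑ y : β, Real.negMulLog (rr y) := by
    have hm' : (n : ℝ) ≠ 0 := ne_of_gt hn'
    field_simp
  have hexp2 : (1/(n:ℝ)) * ((∑ i : Fin n, ∑ c : γ, ∑ d : δ, ∑ y : β,
      Real.negMulLog (PP i c d y))
      - ((n:ℝ) - 1) * (∑ d : δ, ∑ y : β, Real.negMulLog (WW d y)))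
      = (1/(n:ℝ)) * (∑ i : Fin n, ∑ c : γ, ∑ d : δ, ∑ y : β, Real.negMulLog (PP i c d y))
        - (∑ d : δ, ∑ y : β, Real.negMulLog (WW d y))
        + (1/(n:ℝ)) * (∑ d : δ, ∑ y : β, Real.negMulLog (WW d y)) := by
    have hm' : (n : ℝ) ≠ 0 := ne_of_gt hn'
    field_simp
    ring
  rw [hexp, hexp2] at hS
  have hrhs : (1 / (n:ℝ)) * ((entropy p (fun ω => (X ω, Y ω))
      - ∑ y : β, Real.negMulLog (rr y))
      - (entropy p (fun ω => (X ω, Y ω)) - ∑ d : δ, ∑ y : β, Real.negMulLog (WW d y)))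
      = (1/(n:ℝ)) * (∑ d : δ, ∑ y : β, Real.negMulLog (WW d y))
        - (1/(n:ℝ)) * ∑ y : β, Real.negMulLog (rr y) := by
    ring
  linarith [hS, hrhs]
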